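/- (Existence and uniqueness of the Janet completion.) Let n ≥ 1 and M ⊂ (ℤ_{≥0})^n be a finite set of multi-indices. Write ⟨M⟩ := { α + β : α ∈ M, β ∈ (ℤ_{≥0})^n } for the monoid ideal generated by M, and for a finite set N write [N] := ⋃_{α∈N} C_N(α), where C_N(α) is the Janet cone of α with respect to N. Call a finite set N Janet complete if [N] = ⟨N⟩. Then there exists a finite Janet complete set M* with M ⊆ M* ⊆ ⟨M⟩ that is the unique smallest such set: M* ⊆ M' for every finite Janet complete set M' with M ⊆ M' ⊆ ⟨M⟩. -/
import Mathlib

open Finset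

/-- The index `k` is multiplicative for the multi-index `α` with respect to the finite
set `N` of multi-indices (Janet division). -/
def IsMultiplicative {n : ℕ} (N : Finset (Fin n → ℕ)) (α : Fin n → ℕ) (k : Fin n) :
    Prop :=
  α k = (N.filter fun α' => ∀ j : Fin n, j < k → α' j = α j).sup fun α' => α' k

/-- The Janet cone of `α` with respect to `N`. -/
def janetCone {n : ℕ} (N : Finset (Fin n → ℕ)) (α : Fin n → ℕ) : Set (Fin n → ℕ) :=
  {γ | ∃ β : Fin n → ℕ, γ = α + β ∧ ∀ k : Fin n, ¬ IsMultiplicative N α k → β k = 0}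

/-- The monoid ideal `⟨N⟩` generated by `N` in `(ℤ_{≥0})^n`. -/
def monIdeal {n : ℕ} (N : Finset (Fin n → ℕ)) : Set (Fin n → ℕ) :=
  {γ | ∃ α ∈ N, ∃ β : Fin n → ℕ, γ = α + β}

/-- `[N]`, the union of the Janet cones of the elements of `N`. -/
def janetSpan {n : ℕ} (N : Finset (Fin n → ℕ)) : Set (Fin n → ℕ) :=
  ⋃ α ∈ N, janetCone N α

/-- `N` is Janet complete if `[N] = ⟨N⟩`. -/
def JanetComplete {n : ℕ} (N : Finset (Fin n → ℕ)) : Prop :=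
  janetSpan N = monIdeal N

/-- The slice of a set of multi-indices at first coordinate `b`. -/
def jslice {n : ℕ} (S : Finset (Fin (n+1) → ℕ)) (b : ℕ) : Finset (Fin n → ℕ) :=
  (S.filter fun α => α 0 = b).image Fin.tail

/-- The union of the slices with first coordinate at most `b`. -/
def jsliceLE {n : ℕ} (S : Finset (Fin (n+1) → ℕ)) (b : ℕ) : Finset (Fin n → ℕ) :=
  (S.filter fun α => α 0 ≤ b).image Fin.tail

-- basic lemmas
lemma mem_monIdeal_iff {n : ℕ} {N : Finset (Fin n → ℕ)} {γ : Fin n → ℕ} :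
    γ ∈ monIdeal N ↔ ∃ α ∈ N, α ≤ γ := by
  constructor
  · rintro ⟨α, hα, β, rfl⟩
    exact ⟨α, hα, fun i => Nat.le_add_right _ _⟩
  · rintro ⟨α, hα, hle⟩
    exact ⟨α, hα, fun i => γ i - α i, funext fun i => (Nat.add_sub_cancel' (hle i)).symm⟩

lemma monIdeal_subset {n : ℕ} {S T : Finset (Fin n → ℕ)}
    (h : ∀ s ∈ S, (s : Fin n → ℕ) ∈ monIdeal T) : monIdeal S ⊆ monIdeal T := by
  intro γ hγ
  rw [mem_monIdeal_iff] at hγ ⊢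
  obtain ⟨s, hs, hle⟩ := hγ
  obtain ⟨t, ht, hle'⟩ := mem_monIdeal_iff.1 (h s hs)
  exact ⟨t, ht, le_trans hle' hle⟩

lemma monIdeal_mono {n : ℕ} {S T : Finset (Fin n → ℕ)} (h : S ⊆ T) :
    monIdeal S ⊆ monIdeal T :=
  monIdeal_subset fun s hs => mem_monIdeal_iff.2 ⟨s, h hs, le_refl _⟩

lemma self_mem_janetCone {n : ℕ} (N : Finset (Fin n → ℕ)) (α : Fin n → ℕ) :
    α ∈ janetCone N α :=
  ⟨0, by simp, fun _ _ => rfl⟩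

lemma subset_janetSpan {n : ℕ} (N : Finset (Fin n → ℕ)) : ↑N ⊆ janetSpan N := by
  intro α hα
  exact Set.mem_biUnion hα (self_mem_janetCone N α)

lemma janetCone_subset_monIdeal {n : ℕ} {N : Finset (Fin n → ℕ)} {α : Fin n → ℕ}
    (hα : α ∈ N) : janetCone N α ⊆ monIdeal N := by
  rintro γ ⟨β, rfl, -⟩
  exact ⟨α, hα, β, rfl⟩

lemma janetSpan_subset_monIdeal {n : ℕ} (N : Finset (Fin n → ℕ)) :
    janetSpan N ⊆ monIdeal N := by
  intro γ hγ
  obtain ⟨α, hα, hc⟩ := Set.mem_iUnion₂.1 hγ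
  exact janetCone_subset_monIdeal hα hc

lemma janetSpan_empty {n : ℕ} : janetSpan (∅ : Finset (Fin n → ℕ)) = ∅ := by
  simp [janetSpan]

lemma monIdeal_empty {n : ℕ} : monIdeal (∅ : Finset (Fin n → ℕ)) = ∅ := by
  simp [monIdeal]

lemma janetSpan_nonempty_iff {n : ℕ} {N : Finset (Fin n → ℕ)} :
    (janetSpan N).Nonempty → N.Nonempty := by
  rintro ⟨γ, hγ⟩
  obtain ⟨α, hα, -⟩ := Set.mem_iUnion₂.1 hγ
  exact ⟨α, hα⟩

lemma mem_jslice {n : ℕ} {S : Finset (Fin (n+1) → ℕ)} {b : ℕ} {t : Fin n → ℕ} :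
    t ∈ jslice S b ↔ ∃ α ∈ S, α 0 = b ∧ Fin.tail α = t := by
  simp [jslice, and_assoc]

lemma mem_jsliceLE {n : ℕ} {S : Finset (Fin (n+1) → ℕ)} {b : ℕ} {t : Fin n → ℕ} :
    t ∈ jsliceLE S b ↔ ∃ α ∈ S, α 0 ≤ b ∧ Fin.tail α = t := by
  simp [jsliceLE, and_assoc]

lemma le_iff_head_tail {n : ℕ} {α γ : Fin (n+1) → ℕ} :
    α ≤ γ ↔ α 0 ≤ γ 0 ∧ Fin.tail α ≤ Fin.tail γ := by
  constructor
  · intro h; exact ⟨h 0, fun i => h i.succ⟩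
  · rintro ⟨h0, ht⟩ j
    rcases Fin.eq_zero_or_eq_succ j with rfl | ⟨i, rfl⟩
    · exact h0
    · exact ht i

-- multiplicativity of index 0
lemma isMult_zero_iff {n : ℕ} (N : Finset (Fin (n+1) → ℕ)) (α : Fin (n+1) → ℕ) :
    IsMultiplicative N α 0 ↔ α 0 = N.sup fun α' => α' 0 := by
  unfold IsMultiplicative
  rw [Finset.filter_true_of_mem]
  intro x hx j hj
  exact absurd hj (Fin.not_lt_zero j)

-- multiplicativity of successor indices
lemma isMult_succ_iff {n : ℕ} (N : Finset (Fin (n+1) → ℕ)) (α : Fin (n+1) → ℕ)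
    (k : Fin n) :
    IsMultiplicative N α k.succ ↔ IsMultiplicative (jslice N (α 0)) (Fin.tail α) k := by
  unfold IsMultiplicative
  have himg : ((jslice N (α 0)).filter fun t' => ∀ j : Fin n, j < k → t' j = Fin.tail α j)
      = (N.filter fun α' => ∀ j : Fin (n+1), j < k.succ → α' j = α j).image Fin.tail := by
    ext t
    simp only [Finset.mem_filter, Finset.mem_image, mem_jslice]
    constructor
    · rintro ⟨⟨β, hβ, h0, rfl⟩, hcond⟩
      refine ⟨β, ⟨hβ, ?_⟩, rfl⟩
      intro j hj
      rcases Fin.eq_zero_or_eq_succ j with rfl | ⟨i, rfl⟩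
      · exact h0
      · exact hcond i (by rwa [Fin.succ_lt_succ_iff] at hj)
    · rintro ⟨β, ⟨hβ, hcond⟩, rfl⟩
      refine ⟨⟨β, hβ, hcond 0 (Fin.succ_pos k), rfl⟩, ?_⟩
      intro j hj
      exact hcond j.succ (by rwa [Fin.succ_lt_succ_iff])
  rw [himg, Finset.sup_image]
  rfl

lemma janetCone_decomp {n : ℕ} {N : Finset (Fin (n+1) → ℕ)} {α γ : Fin (n+1) → ℕ} :
    γ ∈ janetCone N α ↔
      α 0 ≤ γ 0 ∧ (IsMultiplicative N α 0 ∨ γ 0 = α 0) ∧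
        Fin.tail γ ∈ janetCone (jslice N (α 0)) (Fin.tail α) := by
  constructor
  · rintro ⟨β, rfl, hnm⟩
    have h0 : (α + β) 0 = α 0 + β 0 := rfl
    refine ⟨by simp [h0], ?_, ?_⟩
    · by_cases hm : IsMultiplicative N α 0
      · exact Or.inl hm
      · exact Or.inr (by simp [h0, hnm 0 hm])
    · refine ⟨Fin.tail β, ?_, ?_⟩
      · funext i; rfl
      · intro k hk
        exact hnm k.succ (fun hm => hk ((isMult_succ_iff N α k).1 hm))
  · rintro ⟨hle, hor, β', hβ', hnm'⟩
    refine ⟨Fin.cons (γ 0 - α 0) β', ?_, ?_⟩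
    · funext j
      rcases Fin.eq_zero_or_eq_succ j with rfl | ⟨i, rfl⟩
      · simp only [Pi.add_apply, Fin.cons_zero]; omega
      · simp only [Pi.add_apply, Fin.cons_succ]
        exact congrFun hβ' i
    · intro k hk
      rcases Fin.eq_zero_or_eq_succ k with rfl | ⟨i, rfl⟩
      · rw [Fin.cons_zero]
        rcases hor with hm | heq
        · exact absurd hm hk
        · omega
      · rw [Fin.cons_succ]
        exact hnm' i (fun hm => hk ((isMult_succ_iff N α i).2 hm))

lemma janetSpan_decomp {n : ℕ} {N : Finset (Fin (n+1) → ℕ)} {γ : Fin (n+1) → ℕ} :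
    γ ∈ janetSpan N ↔
      (N.sup (fun α => α 0) ≤ γ 0 ∧ Fin.tail γ ∈ janetSpan (jslice N (N.sup fun α => α 0)))
      ∨ (γ 0 < N.sup (fun α => α 0) ∧ Fin.tail γ ∈ janetSpan (jslice N (γ 0))) := by
  set A := N.sup (fun α => α 0) with hA
  constructor
  · intro hγ
    obtain ⟨α, hα, hc⟩ := Set.mem_iUnion₂.1 hγ
    rw [janetCone_decomp] at hc
    obtain ⟨hle, hor, htail⟩ := hc
    have hαA : α 0 ≤ A := Finset.le_sup (f := fun α => α 0) hα
    by_cases hm : α 0 = A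
    · left
      rw [hm] at hle htail
      exact ⟨hle, Set.mem_biUnion (mem_jslice.2 ⟨α, hα, hm, rfl⟩) htail⟩
    · right
      have heq : γ 0 = α 0 := by
        rcases hor with hmul | h
        · exact absurd ((isMult_zero_iff N α).1 hmul) hm
        · exact h
      have hlt : γ 0 < A := heq ▸ lt_of_le_of_ne hαA hm
      refine ⟨hlt, ?_⟩
      rw [heq]
      exact Set.mem_biUnion (mem_jslice.2 ⟨α, hα, rfl, rfl⟩) htail
  · rintro (⟨hle, ht⟩ | ⟨hlt, ht⟩)
    · obtain ⟨t, htm, hc⟩ := Set.mem_iUnion₂.1 ht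
      obtain ⟨α, hα, h0, rfl⟩ := mem_jslice.1 htm
      have hc' : γ ∈ janetCone N α := by
        have h1 : α 0 ≤ γ 0 := le_trans (le_of_eq h0) hle
        refine janetCone_decomp.2 ⟨h1, Or.inl ((isMult_zero_iff N α).2 h0), ?_⟩
        rwa [h0]
      exact Set.mem_biUnion hα hc' 
    · obtain ⟨t, htm, hc⟩ := Set.mem_iUnion₂.1 ht
      obtain ⟨α, hα, h0, rfl⟩ := mem_jslice.1 htm
      have hc' : γ ∈ janetCone N α := by
        have h1 : α 0 ≤ γ 0 := le_of_eq h0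
        refine janetCone_decomp.2 ⟨h1, Or.inr h0.symm, ?_⟩
        rwa [h0]
      exact Set.mem_biUnion hα hc' 

lemma mem_monIdeal_head_tail {n : ℕ} {G : Finset (Fin (n+1) → ℕ)} {γ : Fin (n+1) → ℕ} :
    γ ∈ monIdeal G ↔ Fin.tail γ ∈ monIdeal (jsliceLE G (γ 0)) := by
  rw [mem_monIdeal_iff, mem_monIdeal_iff]
  constructor
  · rintro ⟨g, hg, hle⟩
    rw [le_iff_head_tail] at hle
    exact ⟨Fin.tail g, mem_jsliceLE.2 ⟨g, hg, hle.1, rfl⟩, hle.2⟩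
  · rintro ⟨t, htm, hle⟩
    obtain ⟨g, hg, h0, rfl⟩ := mem_jsliceLE.1 htm
    exact ⟨g, hg, le_iff_head_tail.2 ⟨h0, hle⟩⟩

lemma jsliceLE_mono {n : ℕ} (G : Finset (Fin (n+1) → ℕ)) {b c : ℕ} (h : b ≤ c) :
    jsliceLE G b ⊆ jsliceLE G c := by
  intro t ht
  obtain ⟨g, hg, h0, rfl⟩ := mem_jsliceLE.1 ht
  exact mem_jsliceLE.2 ⟨g, hg, le_trans h0 h, rfl⟩

theorem janet_P : ∀ (n : ℕ) (R G : Finset (Fin n → ℕ)), ↑R ⊆ monIdeal G →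
    ∃ N : Finset (Fin n → ℕ), R ⊆ N ∧ ↑N ⊆ monIdeal G ∧ janetSpan N = monIdeal G ∧
      ∀ N' : Finset (Fin n → ℕ), R ⊆ N' → ↑N' ⊆ monIdeal G →
        janetSpan N' = monIdeal G → N ⊆ N' := by
  intro n
  induction n with
  | zero =>
    intro R G hRG
    refine ⟨G, ?_, ?_, ?_, ?_⟩
    · intro r hr
      obtain ⟨g, hg, -⟩ := mem_monIdeal_iff.1 (hRG hr)
      exact (Subsingleton.elim r g) ▸ hg
    · intro g hg
      exact mem_monIdeal_iff.2 ⟨g, hg, le_refl _⟩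
    · refine Set.Subset.antisymm (janetSpan_subset_monIdeal G) ?_
      intro γ hγ
      obtain ⟨g, hg, -⟩ := mem_monIdeal_iff.1 hγ
      exact subset_janetSpan G ((Subsingleton.elim g γ) ▸ hg)
    · intro N' hR' hN'I hN'span g hg
      have hγ : (g : Fin 0 → ℕ) ∈ janetSpan N' := by
        rw [hN'span]; exact mem_monIdeal_iff.2 ⟨g, hg, le_refl _⟩
      obtain ⟨x, hx⟩ := janetSpan_nonempty_iff ⟨g, hγ⟩
      exact (Subsingleton.elim x g) ▸ hx
  | succ n ih =>
    intro R G hRG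
    rcases G.eq_empty_or_nonempty with rfl | hG
    · rw [monIdeal_empty] at hRG ⊢
      have hR : R = ∅ := Finset.eq_empty_of_forall_notMem fun x hx => hRG hx
      subst hR
      exact ⟨∅, Finset.Subset.refl _, by simp, by rw [janetSpan_empty], fun _ _ _ _ => by simp⟩
    · -- main case
      classical
      obtain ⟨g0, hg0G, hg0min⟩ := G.exists_min_image (fun g => g 0) hG
      have F0 : ∀ γ ∈ monIdeal G, g0 0 ≤ γ 0 := by
        intro γ hγ
        obtain ⟨g, hg, hle⟩ := mem_monIdeal_iff.1 hγ
        exact le_trans (hg0min g hg) (hle 0)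
      have hp_ex : ∃ b : ℕ, ((∀ r ∈ R, r 0 ≤ b) ∧ g0 0 ≤ b) ∧
          ∀ g ∈ G, Fin.tail g ∈ monIdeal (jsliceLE G b) := by
        refine ⟨(R.sup fun r => r 0) ⊔ (G.sup fun g => g 0), ⟨?_, ?_⟩, ?_⟩
        · intro r hr
          exact le_trans (Finset.le_sup (f := fun r => r 0) hr) le_sup_left
        · exact le_trans (Finset.le_sup (f := fun g => g 0) hg0G) le_sup_right
        · intro g hg
          refine mem_monIdeal_iff.2 ⟨Fin.tail g, mem_jsliceLE.2 ⟨g, hg, ?_, rfl⟩, le_refl _⟩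
          exact le_trans (Finset.le_sup (f := fun g => g 0) hg) le_sup_right
      obtain ⟨A, hA, hAmin⟩ : ∃ A : ℕ, (((∀ r ∈ R, r 0 ≤ A) ∧ g0 0 ≤ A) ∧
          ∀ g ∈ G, Fin.tail g ∈ monIdeal (jsliceLE G A)) ∧
          ∀ b : ℕ, (((∀ r ∈ R, r 0 ≤ b) ∧ g0 0 ≤ b) ∧
            ∀ g ∈ G, Fin.tail g ∈ monIdeal (jsliceLE G b)) → A ≤ b :=
        ⟨Nat.find hp_ex, Nat.find_spec hp_ex, fun b hb => Nat.find_min' hp_ex hb⟩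
      have ha0A : g0 0 ≤ A := hA.1.2
      have hI_stab : ∀ c, A ≤ c → monIdeal (jsliceLE G c) = monIdeal (jsliceLE G A) := by
        intro c hc
        refine Set.Subset.antisymm ?_ (monIdeal_mono (jsliceLE_mono G hc))
        refine monIdeal_subset ?_
        intro s hs
        obtain ⟨g, hg, -, rfl⟩ := mem_jsliceLE.1 hs
        exact hA.2 g hg
      have hsub : ∀ b, ↑(jslice R b) ⊆ monIdeal (jsliceLE G b) := by
        intro b t ht
        obtain ⟨r, hr, h0, rfl⟩ := mem_jslice.1 ht
        have := mem_monIdeal_head_tail.1 (hRG hr)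
        rwa [h0] at this
      choose Nb h1 h2 h3 h4 using fun b => ih (jslice R b) (jsliceLE G b) (hsub b)
      refine ⟨(Finset.Icc (g0 0) A).biUnion (fun b => (Nb b).image (Fin.cons b)), ?_⟩
      set Nstar : Finset (Fin (n+1) → ℕ) :=
        (Finset.Icc (g0 0) A).biUnion (fun b => (Nb b).image (Fin.cons b)) with hNstardef
      have mem_Nstar : ∀ x : Fin (n+1) → ℕ,
          x ∈ Nstar ↔ ∃ b, g0 0 ≤ b ∧ b ≤ A ∧ ∃ t ∈ Nb b, x = Fin.cons b t := by
        intro x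
        simp only [hNstardef, Finset.mem_biUnion, Finset.mem_Icc, Finset.mem_image]
        constructor
        · rintro ⟨b, ⟨hb1, hb2⟩, t, ht, rfl⟩; exact ⟨b, hb1, hb2, t, ht, rfl⟩
        · rintro ⟨b, hb1, hb2, t, ht, rfl⟩; exact ⟨b, ⟨hb1, hb2⟩, t, ht, rfl⟩
      clear_value Nstar
      have hslice : ∀ b, g0 0 ≤ b → b ≤ A → jslice Nstar b = Nb b := by
        intro b hb1 hb2
        ext t
        rw [mem_jslice]
        constructor
        · rintro ⟨α, hα, h0, rfl⟩
          obtain ⟨b', -, -, t', ht', rfl⟩ := (mem_Nstar α).1 hα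
          rw [Fin.cons_zero] at h0
          subst h0
          rwa [Fin.tail_cons]
        · intro ht
          refine ⟨Fin.cons b t, (mem_Nstar _).2 ⟨b, hb1, hb2, t, ht, rfl⟩, Fin.cons_zero _ _,
            Fin.tail_cons _ _⟩
      have hslice0 : ∀ b, b < g0 0 → jslice Nstar b = ∅ := by
        intro b hb
        refine Finset.eq_empty_of_forall_notMem fun t ht => ?_
        obtain ⟨α, hα, h0, rfl⟩ := mem_jslice.1 ht
        obtain ⟨b', hb1, -, t', -, rfl⟩ := (mem_Nstar α).1 hα
        rw [Fin.cons_zero] at h0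
        omega
      have hNbA : (Nb A).Nonempty := by
        have : Fin.tail g0 ∈ monIdeal (jsliceLE G A) :=
          mem_monIdeal_iff.2 ⟨Fin.tail g0, mem_jsliceLE.2 ⟨g0, hg0G, ha0A, rfl⟩, le_refl _⟩
        rw [← h3 A] at this
        exact janetSpan_nonempty_iff ⟨_, this⟩
      have hsup : Nstar.sup (fun α => α 0) = A := by
        apply le_antisymm
        · refine Finset.sup_le fun x hx => ?_
          obtain ⟨b, -, hb2, t, -, rfl⟩ := (mem_Nstar x).1 hx
          simpa using hb2
        · obtain ⟨t, ht⟩ := hNbA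
          have hx : Fin.cons A t ∈ Nstar := (mem_Nstar _).2 ⟨A, ha0A, le_refl A, t, ht, rfl⟩
          simpa using Finset.le_sup (f := fun α => α 0) hx
      refine ⟨?_, ?_, ?_, ?_⟩
      · -- R ⊆ Nstar
        intro r hr
        have hb1 : g0 0 ≤ r 0 := F0 r (hRG hr)
        have hb2 : r 0 ≤ A := hA.1.1 r hr
        have ht : Fin.tail r ∈ Nb (r 0) := h1 _ (mem_jslice.2 ⟨r, hr, rfl, rfl⟩)
        have := (mem_Nstar (Fin.cons (r 0) (Fin.tail r))).2 ⟨r 0, hb1, hb2, _, ht, rfl⟩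
        rwa [Fin.cons_self_tail] at this
      · -- Nstar ⊆ monIdeal G
        intro x hx
        obtain ⟨b, -, -, t, ht, rfl⟩ := (mem_Nstar x).1 hx
        have : t ∈ monIdeal (jsliceLE G b) := h2 b ht
        rw [mem_monIdeal_head_tail, Fin.cons_zero, Fin.tail_cons]
        exact this
      · -- janetSpan Nstar = monIdeal G
        ext γ
        rw [janetSpan_decomp, hsup, mem_monIdeal_head_tail]
        rcases lt_or_ge (γ 0) A with hc | hc
        · rcases lt_or_ge (γ 0) (g0 0) with hc2 | hc2
          · rw [hslice0 _ hc2, janetSpan_empty]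
            simp only [Set.mem_empty_iff_false, and_false, false_or, or_false]
            constructor
            · rintro ⟨h, -⟩
              exact absurd h (not_le.2 (lt_of_lt_of_le hc2 (le_trans (hg0min g0 hg0G) ha0A)))
            · intro h
              have h5 : γ ∈ monIdeal G := mem_monIdeal_head_tail.2 h
              exact absurd (F0 γ h5) (not_le.2 hc2)
          · rw [hslice _ hc2 (le_of_lt hc), h3]
            constructor
            · rintro (⟨h, -⟩ | ⟨-, h⟩)
              · exact absurd h (not_le.2 hc)
              · exact h
            · intro h; exact Or.inr ⟨hc, h⟩
        · rw [hslice A ha0A (le_refl A), h3, hI_stab (γ 0) hc]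
          constructor
          · rintro (⟨-, h⟩ | ⟨h, -⟩)
            · exact h
            · exact absurd h (not_lt.2 hc)
          · intro h; exact Or.inl ⟨hc, h⟩
      · -- minimality
        intro N' hR' hN'I hN'span
        have hNe' : N'.Nonempty := by
          have hgm : g0 ∈ janetSpan N' := by
            rw [hN'span]; exact mem_monIdeal_iff.2 ⟨g0, hg0G, le_refl _⟩
          exact janetSpan_nonempty_iff ⟨g0, hgm⟩
        obtain ⟨A', hA'eq⟩ : ∃ A', N'.sup (fun α => α 0) = A' := ⟨_, rfl⟩
        have ha0A' : g0 0 ≤ A' := by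
          obtain ⟨x, hx⟩ := hNe'
          refine le_trans (F0 x (hN'I hx)) ?_
          rw [← hA'eq]
          exact Finset.le_sup (f := fun α => α 0) hx
        have hcov : ∀ b, g0 0 ≤ b → b ≤ A' →
            janetSpan (jslice N' b) = monIdeal (jsliceLE G b) := by
          intro b hb1 hb2
          ext t
          have hγ : (Fin.cons b t : Fin (n+1) → ℕ) ∈ janetSpan N' ↔
              (Fin.cons b t : Fin (n+1) → ℕ) ∈ monIdeal G := by rw [hN'span]
          rw [janetSpan_decomp, mem_monIdeal_head_tail, Fin.cons_zero, Fin.tail_cons,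
            hA'eq] at hγ
          rcases eq_or_lt_of_le hb2 with heq | hlt
          · rw [← heq] at hγ
            constructor
            · intro h
              exact hγ.1 (Or.inl ⟨le_refl _, h⟩)
            · intro h
              rcases hγ.2 h with ⟨-, h'⟩ | ⟨h', -⟩
              · exact h'
              · exact absurd h' (lt_irrefl b)
          · constructor
            · intro h
              exact hγ.1 (Or.inr ⟨hlt, h⟩)
            · intro h
              rcases hγ.2 h with ⟨h', -⟩ | ⟨-, h'⟩
              · exact absurd h' (not_le.2 hlt)
              · exact h'
        have hAA' : A ≤ A' := by
          refine hAmin A' ⟨⟨?_, ha0A'⟩, ?_⟩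
          · intro r hr
            rw [← hA'eq]
            exact Finset.le_sup (f := fun α => α 0) (hR' hr)
          · intro g hg
            have hgI : g ∈ janetSpan N' := by
              rw [hN'span]; exact mem_monIdeal_iff.2 ⟨g, hg, le_refl _⟩
            rw [janetSpan_decomp, hA'eq] at hgI
            rcases hgI with ⟨hle, ht⟩ | ⟨hlt, ht⟩
            · rw [hcov A' ha0A' (le_refl _)] at ht
              exact ht
            · rw [hcov (g 0) (hg0min g hg) (le_of_lt hlt)] at ht
              exact monIdeal_mono (jsliceLE_mono G (le_of_lt hlt)) ht
        intro x hx
        obtain ⟨b, hb1, hb2, t, ht, rfl⟩ := (mem_Nstar x).1 hx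
        have hbA' : b ≤ A' := le_trans hb2 hAA'
        have hmin := h4 b (jslice N' b) ?_ ?_ (hcov b hb1 hbA')
        · obtain ⟨x', hx', h0, htail⟩ := mem_jslice.1 (hmin ht)
          have hxx : x' = Fin.cons b t := by
            rw [← h0, ← htail, Fin.cons_self_tail]
          rwa [← hxx]
        · intro s hs
          obtain ⟨r, hr, h0, rfl⟩ := mem_jslice.1 hs
          exact mem_jslice.2 ⟨r, hR' hr, h0, rfl⟩
        · intro s hs
          obtain ⟨x', hx', h0, rfl⟩ := mem_jslice.1 hs
          have := mem_monIdeal_head_tail.1 (hN'I hx')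
          rwa [h0] at this

/-- **Existence and uniqueness of the Janet completion**: every finite set `M` of
multi-indices has a unique smallest finite Janet complete superset contained in `⟨M⟩`. -/
theorem janet_completion_exists_unique (n : ℕ) (hn : 1 ≤ n) (M : Finset (Fin n → ℕ)) :
    ∃ Mstar : Finset (Fin n → ℕ),
      M ⊆ Mstar ∧ ↑Mstar ⊆ monIdeal M ∧ JanetComplete Mstar ∧
        ∀ M' : Finset (Fin n → ℕ), M ⊆ M' → ↑M' ⊆ monIdeal M → JanetComplete M' →
          Mstar ⊆ M' := by
  have hMM : ↑M ⊆ monIdeal M := fun x hx => mem_monIdeal_iff.2 ⟨x, hx, le_refl _⟩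
  obtain ⟨N, h1, h2, h3, h4⟩ := janet_P n M M hMM
  have hIdeal : ∀ M' : Finset (Fin n → ℕ), M ⊆ M' → ↑M' ⊆ monIdeal M →
      monIdeal M' = monIdeal M := fun M' hs hI =>
    Set.Subset.antisymm (monIdeal_subset fun s hs' => hI hs') (monIdeal_mono hs)
  refine ⟨N, h1, h2, ?_, ?_⟩
  · unfold JanetComplete
    rw [h3, hIdeal N h1 h2]
  · intro M' hMM' hM'I hM'c
    refine h4 M' hMM' hM'I ?_
    unfold JanetComplete at hM'c
    rw [hM'c, hIdeal M' hMM' hM'I]
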